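/- For every $\bar a\in\Sigma$ and every $i\in\{1,\dots,l\}$, the limit $c_{\bar a}(i):=\lim_{n\to\infty}(E^n_{\bar a})_{ij}$ exists and its value is independent of $j\in\{1,\dots,l\}$. -/

import Mathlib

open Filter Topology

noncomputable section

/-- Product of matrices `A (a 0) * A (a 1) * ⋯ * A (a (n-1))`,
representing `A_{a_1} A_{a_2} ⋯ A_{a_n}` for the (1-indexed) sequence `ā`. -/
def matSeq {l k : ℕ} {R : Type} [Semiring R] (A : Fin k → Matrix (Fin l) (Fin l) R) :
    (ℕ → Fin k) → ℕ → Matrix (Fin l) (Fin l) R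
  | _, 0 => 1
  | a, n + 1 => A (a 0) * matSeq A (fun i => a (i + 1)) n

/-- Product `ω (a 0) * ⋯ * ω (a (n-1))`, representing `ω_{a_1} ⋯ ω_{a_n}`. -/
def prodSeq {k : ℕ} (ω : Fin k → ℝ) : (ℕ → Fin k) → ℕ → ℝ
  | _, 0 => 1
  | a, n + 1 => ω (a 0) * prodSeq ω (fun i => a (i + 1)) n

open Classical in
/-- The metric on `Σ = {1,…,k}^ℕ`: `d(ā,b̄) = 1/L` where `L` is the least (1-indexed)
position where the sequences differ, and `0` if they are equal. -/
def dSigma {k : ℕ} (a b : ℕ → Fin k) : ℝ :=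
  if h : ∃ n, a n ≠ b n then 1 / ((Nat.find h : ℝ) + 1) else 0

/-- The matrix `E^n_ā` with entries `(A^n_ā)_{ij} / (ω^n_ā V_j)`. -/
def Emat {l k : ℕ} (A : Fin k → Matrix (Fin l) (Fin l) ℝ) (ω : Fin k → ℝ) (V : Fin l → ℝ)
    (a : ℕ → Fin k) (n : ℕ) : Matrix (Fin l) (Fin l) ℝ :=
  fun i j => matSeq A a n i j / (prodSeq ω a n * V j)

/-- The set of columns of `E^n_ā`, as vectors of `ℝ^l`. -/
def Ecols {l k : ℕ} (A : Fin k → Matrix (Fin l) (Fin l) ℝ) (ω : Fin k → ℝ) (V : Fin l → ℝ)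
    (a : ℕ → Fin k) (n : ℕ) : Set (EuclideanSpace ℝ (Fin l)) :=
  {v | ∃ j : Fin l, ∀ i : Fin l, v i = Emat A ω V a n i j}

/-- `Δ^n_ā`, the convex hull in `ℝ^l` of the columns of `E^n_ā`. -/
def DeltaSet {l k : ℕ} (A : Fin k → Matrix (Fin l) (Fin l) ℝ) (ω : Fin k → ℝ) (V : Fin l → ℝ)
    (a : ℕ → Fin k) (n : ℕ) : Set (EuclideanSpace ℝ (Fin l)) :=
  convexHull ℝ (Ecols A ω V a n)

namespace FreqAux

variable {l k : ℕ}

lemma matSeq_congr {R : Type} [Semiring R] (A : Fin k → Matrix (Fin l) (Fin l) R)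
    (a b : ℕ → Fin k) (n : ℕ) (h : ∀ i < n, a i = b i) :
    matSeq A a n = matSeq A b n := by
  induction n generalizing a b with
  | zero => rfl
  | succ n ih =>
    show A (a 0) * matSeq A (fun i => a (i + 1)) n = A (b 0) * matSeq A (fun i => b (i + 1)) n
    rw [h 0 n.succ_pos, ih (fun i => a (i + 1)) (fun i => b (i + 1))
      (fun i hi => h (i + 1) (by omega))]

lemma prodSeq_congr (ω : Fin k → ℝ) (a b : ℕ → Fin k) (n : ℕ) (h : ∀ i < n, a i = b i) :
    prodSeq ω a n = prodSeq ω b n := by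
  induction n generalizing a b with
  | zero => rfl
  | succ n ih =>
    show ω (a 0) * prodSeq ω (fun i => a (i + 1)) n = ω (b 0) * prodSeq ω (fun i => b (i + 1)) n
    rw [h 0 n.succ_pos, ih (fun i => a (i + 1)) (fun i => b (i + 1))
      (fun i hi => h (i + 1) (by omega))]

lemma matSeq_add {R : Type} [Semiring R] (A : Fin k → Matrix (Fin l) (Fin l) R)
    (a : ℕ → Fin k) (m n : ℕ) :
    matSeq A a (m + n) = matSeq A a m * matSeq A (fun i => a (i + m)) n := by
  induction m generalizing a with
  | zero => simp [matSeq]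
  | succ m ih =>
    rw [show m + 1 + n = (m + n) + 1 from by omega]
    show A (a 0) * matSeq A (fun i => a (i + 1)) (m + n)
        = (A (a 0) * matSeq A (fun i => a (i + 1)) m) * _
    rw [ih (fun i => a (i + 1)), Matrix.mul_assoc]
    have : (fun i => a (i + m + 1)) = fun i => a (i + (m + 1)) :=
      funext fun i => by rw [Nat.add_assoc]
    rw [this]

lemma prodSeq_add (ω : Fin k → ℝ) (a : ℕ → Fin k) (m n : ℕ) :
    prodSeq ω a (m + n) = prodSeq ω a m * prodSeq ω (fun i => a (i + m)) n := by
  induction m generalizing a with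
  | zero => simp [prodSeq]
  | succ m ih =>
    rw [show m + 1 + n = (m + n) + 1 from by omega]
    show ω (a 0) * prodSeq ω (fun i => a (i + 1)) (m + n)
        = (ω (a 0) * prodSeq ω (fun i => a (i + 1)) m) * _
    rw [ih (fun i => a (i + 1)), mul_assoc]
    have : (fun i => a (i + m + 1)) = fun i => a (i + (m + 1)) :=
      funext fun i => by rw [Nat.add_assoc]
    rw [this]

lemma matSeq_one {R : Type} [Semiring R] (A : Fin k → Matrix (Fin l) (Fin l) R)
    (a : ℕ → Fin k) : matSeq A a 1 = A (a 0) := by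
  show A (a 0) * matSeq A _ 0 = A (a 0)
  rw [show matSeq A (fun i : ℕ => a (i + 1)) 0 = 1 from rfl, mul_one]

lemma matSeq_succ_right {R : Type} [Semiring R] (A : Fin k → Matrix (Fin l) (Fin l) R)
    (a : ℕ → Fin k) (n : ℕ) :
    matSeq A a (n + 1) = matSeq A a n * A (a n) := by
  rw [matSeq_add, matSeq_one]
  norm_num

lemma prodSeq_succ_right (ω : Fin k → ℝ) (a : ℕ → Fin k) (n : ℕ) :
    prodSeq ω a (n + 1) = prodSeq ω a n * ω (a n) := by
  rw [prodSeq_add]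
  congr 1
  show ω (a (0 + n)) * prodSeq ω (fun i => a (i + 1 + n)) 0 = ω (a n)
  rw [show prodSeq ω (fun i : ℕ => a (i + 1 + n)) 0 = 1 from rfl, mul_one, Nat.zero_add]

lemma prodSeq_pos (ω : Fin k → ℝ) (hω : ∀ i, 0 < ω i) (a : ℕ → Fin k) (n : ℕ) :
    0 < prodSeq ω a n := by
  induction n generalizing a with
  | zero => exact one_pos
  | succ n ih => exact mul_pos (hω _) (ih _)

lemma matSeq_nonneg (A : Fin k → Matrix (Fin l) (Fin l) ℝ)
    (hA : ∀ i : Fin k, ∀ p q : Fin l, 0 ≤ A i p q) (a : ℕ → Fin k) (n : ℕ)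
    (p q : Fin l) : 0 ≤ matSeq A a n p q := by
  induction n generalizing a p q with
  | zero =>
    show (0:ℝ) ≤ (1 : Matrix (Fin l) (Fin l) ℝ) p q
    rw [Matrix.one_apply]
    positivity
  | succ n ih =>
    show (0:ℝ) ≤ (A (a 0) * matSeq A (fun i => a (i + 1)) n) p q
    rw [Matrix.mul_apply]
    exact Finset.sum_nonneg fun m _ => mul_nonneg (hA _ _ _) (ih _ _ _)

lemma matSeq_smul (A : Fin k → Matrix (Fin l) (Fin l) ℝ) (ω : Fin k → ℝ)
    (hω : ∀ i, 0 < ω i) (a : ℕ → Fin k) (n : ℕ) :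
    matSeq (fun i => (ω i)⁻¹ • A i) a n = (prodSeq ω a n)⁻¹ • matSeq A a n := by
  induction n generalizing a with
  | zero =>
    show (1 : Matrix (Fin l) (Fin l) ℝ) = (prodSeq ω a 0)⁻¹ • 1
    rw [show prodSeq ω a 0 = 1 from rfl, inv_one, one_smul]
  | succ n ih =>
    show (ω (a 0))⁻¹ • A (a 0) * matSeq (fun i => (ω i)⁻¹ • A i) (fun i => a (i + 1)) n = _
    rw [ih, show prodSeq ω a (n+1) = ω (a 0) * prodSeq ω (fun i => a (i+1)) n from rfl,
      Matrix.smul_mul, Matrix.mul_smul, smul_smul, mul_inv]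
    rfl

lemma colsum (A : Fin k → Matrix (Fin l) (Fin l) ℝ) (ω : Fin k → ℝ) (V : Fin l → ℝ)
    (heig : ∀ i : Fin k, ∀ j : Fin l, ∑ p, V p * A i p j = ω i * V j)
    (a : ℕ → Fin k) (n : ℕ) (j : Fin l) :
    ∑ p, V p * matSeq A a n p j = prodSeq ω a n * V j := by
  induction n generalizing j with
  | zero =>
    show ∑ p, V p * (1 : Matrix (Fin l) (Fin l) ℝ) p j = 1 * V j
    simp [Matrix.one_apply]
  | succ n ih =>
    rw [matSeq_succ_right, prodSeq_succ_right]
    have : ∀ p, V p * (matSeq A a n * A (a n)) p j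
        = ∑ q, (V p * matSeq A a n p q) * A (a n) q j := by
      intro p
      rw [Matrix.mul_apply, Finset.mul_sum]
      exact Finset.sum_congr rfl fun q _ => by ring
    simp_rw [this]
    rw [Finset.sum_comm]
    have : ∀ q, ∑ p, (V p * matSeq A a n p q) * A (a n) q j
        = (prodSeq ω a n * V q) * A (a n) q j := by
      intro q; rw [← Finset.sum_mul, ih q]
    simp_rw [this]
    have : ∀ q, (prodSeq ω a n * V q) * A (a n) q j
        = prodSeq ω a n * (V q * A (a n) q j) := fun q => by ring
    simp_rw [this, ← Finset.mul_sum, heig, mul_assoc]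

end FreqAux

open FreqAux in
/-- The limit `c_ā(i) = lim_n (E^n_ā)_{ij}` exists and is independent of `j`. -/
theorem freq_limit_exists {l k : ℕ} (hl : 0 < l) (hk : 0 < k)
    (A : Fin k → Matrix (Fin l) (Fin l) ℝ) (ω : Fin k → ℝ) (V : Fin l → ℝ)
    (hA : ∀ i : Fin k, ∀ p q : Fin l, 0 ≤ A i p q)
    (hω : ∀ i, 0 < ω i) (hV : ∀ p, 0 < V p)
    (heig : ∀ i : Fin k, ∀ j : Fin l, ∑ p, V p * A i p j = ω i * V j)
    (N : ℕ) (hN : 0 < N)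
    (hpos : ∀ (b : ℕ → Fin k) (p q : Fin l),
      0 < matSeq (fun i => (ω i)⁻¹ • A i) b N p q) :
    ∀ (a : ℕ → Fin k) (i : Fin l), ∃ c : ℝ, ∀ j : Fin l,
      Tendsto (fun n => Emat A ω V a n i j) atTop (nhds c) := by
  intro a i
  haveI : NeZero l := ⟨hl.ne'⟩
  haveI : NeZero k := ⟨hk.ne'⟩
  set x : ℕ → Fin l → ℝ := fun n j => Emat A ω V a n i j with hx
  set T : ℕ → ℕ → Fin l → Fin l → ℝ := fun n r p q =>
    V p * matSeq A (fun i => a (i + n)) r p q /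
      (prodSeq ω (fun i => a (i + n)) r * V q) with hT
  -- column sums of general coefficient matrices
  have hTsum' : ∀ (b : ℕ → Fin k) (r : ℕ) (q : Fin l),
      ∑ p, V p * matSeq A b r p q / (prodSeq ω b r * V q) = 1 := by
    intro b r q
    rw [← Finset.sum_div, colsum A ω V heig,
      div_self (mul_pos (prodSeq_pos ω hω b r) (hV q)).ne']
  have hTsum : ∀ n r q, ∑ p, T n r p q = 1 := fun n r q => hTsum' _ r q
  have hTnn : ∀ n r p q, 0 ≤ T n r p q := by
    intro n r p q
    exact div_nonneg (mul_nonneg (hV p).le (matSeq_nonneg A hA _ r p q))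
      (mul_pos (prodSeq_pos ω hω _ r) (hV q)).le
  -- the basic step identity
  have step : ∀ n r j, x (n + r) j = ∑ p, x n p * T n r p j := by
    intro n r j
    show Emat A ω V a (n + r) i j = _
    simp only [hx, hT, Emat]
    rw [matSeq_add, prodSeq_add, Matrix.mul_apply, Finset.sum_div]
    refine Finset.sum_congr rfl fun p _ => ?_
    have h1 := (prodSeq_pos ω hω a n).ne'
    have h2 := (prodSeq_pos ω hω (fun i => a (i + n)) r).ne'
    have h3 := (hV p).ne'
    have h4 := (hV j).ne'
    field_simp
  -- the uniform lower bound ε on N-step coefficients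
  have hkne : (⟨0, hk⟩ : Fin k) = ⟨0, hk⟩ := rfl
  set e : (Fin N → Fin k) → (ℕ → Fin k) :=
    fun b i => if h : i < N then b ⟨i, h⟩ else ⟨0, hk⟩ with he
  set g : ((Fin N → Fin k) × Fin l × Fin l) → ℝ := fun z =>
    V z.2.1 * matSeq A (e z.1) N z.2.1 z.2.2 /
      (prodSeq ω (e z.1) N * V z.2.2) with hg
  haveI : Nonempty (Fin l) := ⟨⟨0, hl⟩⟩
  haveI : Nonempty (Fin k) := ⟨⟨0, hk⟩⟩
  have hune : (Finset.univ : Finset ((Fin N → Fin k) × Fin l × Fin l)).Nonempty :=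
    Finset.univ_nonempty
  set ε₀ : ℝ := Finset.univ.inf' hune g with hε₀
  have hgpos : ∀ z, 0 < g z := by
    intro z
    obtain ⟨b, p, q⟩ := z
    have hP := prodSeq_pos ω hω (e b) N
    have h1 := hpos (e b) p q
    rw [matSeq_smul A ω hω] at h1
    have h2 : 0 < (prodSeq ω (e b) N)⁻¹ * matSeq A (e b) N p q := by
      simpa [Matrix.smul_apply, smul_eq_mul] using h1
    have hm : 0 < matSeq A (e b) N p q := by
      have h3 := mul_pos hP h2
      rwa [← mul_assoc, mul_inv_cancel₀ hP.ne', one_mul] at h3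
    exact div_pos (mul_pos (hV p) hm) (mul_pos hP (hV q))
  have hε₀pos : 0 < ε₀ := (Finset.lt_inf'_iff hune).mpr fun z _ => hgpos z
  set ε : ℝ := min ε₀ (1/2) with hεdef
  have hεpos : 0 < ε := lt_min hε₀pos (by norm_num)
  have hεle : ε ≤ 1/2 := min_le_right _ _
  have hTε : ∀ n p q, ε ≤ T n N p q := by
    intro n p q
    have hagree : ∀ i < N, e (fun i : Fin N => a (i.1 + n)) i = a (i + n) := by
      intro i hi
      simp [he, hi]
    have h1 : g (fun i : Fin N => a (i.1 + n), p, q) = T n N p q := by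
      simp only [hg, hT]
      rw [matSeq_congr A _ _ N hagree, prodSeq_congr ω _ _ N hagree]
    calc ε ≤ ε₀ := min_le_left _ _
      _ ≤ g (fun i : Fin N => a (i.1 + n), p, q) := Finset.inf'_le g (Finset.mem_univ _)
      _ = T n N p q := h1
  -- sup and inf over columns
  have hne : (Finset.univ : Finset (Fin l)).Nonempty := Finset.univ_nonempty
  set Mx : ℕ → ℝ := fun n => Finset.univ.sup' hne (x n) with hMx
  set mx : ℕ → ℝ := fun n => Finset.univ.inf' hne (x n) with hmx
  have hxub : ∀ n j, x n j ≤ Mx n := fun n j => Finset.le_sup' (x n) (Finset.mem_univ j)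
  have hxlb : ∀ n j, mx n ≤ x n j := fun n j => Finset.inf'_le (x n) (Finset.mem_univ j)
  have hmM : ∀ n, mx n ≤ Mx n := fun n => (hxlb n ⟨0, hl⟩).trans (hxub n ⟨0, hl⟩)
  have hub : ∀ n r j, x (n + r) j ≤ Mx n := by
    intro n r j
    rw [step n r j]
    calc ∑ p, x n p * T n r p j ≤ ∑ p, Mx n * T n r p j :=
          Finset.sum_le_sum fun p _ =>
            mul_le_mul_of_nonneg_right (hxub n p) (hTnn n r p j)
      _ = Mx n * ∑ p, T n r p j := by rw [Finset.mul_sum]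
      _ = Mx n := by rw [hTsum n r j, mul_one]
  have hlb : ∀ n r j, mx n ≤ x (n + r) j := by
    intro n r j
    rw [step n r j]
    calc mx n = mx n * ∑ p, T n r p j := by rw [hTsum n r j, mul_one]
      _ = ∑ p, mx n * T n r p j := by rw [Finset.mul_sum]
      _ ≤ ∑ p, x n p * T n r p j :=
          Finset.sum_le_sum fun p _ =>
            mul_le_mul_of_nonneg_right (hxlb n p) (hTnn n r p j)
  have hMmono : ∀ n r, Mx (n + r) ≤ Mx n := fun n r =>
    Finset.sup'_le hne _ fun j _ => hub n r j
  have hmmono : ∀ n r, mx n ≤ mx (n + r) := fun n r =>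
    Finset.le_inf' hne _ fun j _ => hlb n r j
  -- contraction
  have hcon : ∀ n, Mx (n + N) ≤ Mx n - ε * (Mx n - mx n) := by
    intro n
    apply Finset.sup'_le hne
    intro j _
    obtain ⟨p₀, -, hp₀⟩ := Finset.exists_mem_eq_inf' hne (x n)
    rw [step n N j,
      ← Finset.add_sum_erase Finset.univ (fun p => x n p * T n N p j) (Finset.mem_univ p₀)]
    have hsplit : T n N p₀ j + ∑ p ∈ Finset.univ.erase p₀, T n N p j = 1 := by
      rw [Finset.add_sum_erase Finset.univ (fun p => T n N p j) (Finset.mem_univ p₀)]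
      exact hTsum n N j
    have hterm : ∑ p ∈ Finset.univ.erase p₀, x n p * T n N p j
        ≤ Mx n * ∑ p ∈ Finset.univ.erase p₀, T n N p j := by
      rw [Finset.mul_sum]
      exact Finset.sum_le_sum fun p _ =>
        mul_le_mul_of_nonneg_right (hxub n p) (hTnn n N p j)
    have hp₀' : mx n = x n p₀ := hp₀
    set t : ℝ := T n N p₀ j with htdef
    have ht : ε ≤ t := hTε n p₀ j
    have hdd : mx n ≤ Mx n := hmM n
    have hrest : ∑ p ∈ Finset.univ.erase p₀, T n N p j = 1 - t := by linarith
    have h1 : x n p₀ * t + ∑ p ∈ Finset.univ.erase p₀, x n p * T n N p j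
        ≤ mx n * t + Mx n * (1 - t) := by
      rw [hp₀']
      exact add_le_add le_rfl (by rw [← hrest]; exact hterm)
    have h2 : mx n * t + Mx n * (1 - t) ≤ Mx n - ε * (Mx n - mx n) := by
      nlinarith [mul_nonneg (sub_nonneg.mpr ht) (sub_nonneg.mpr hdd)]
    exact h1.trans h2
  -- the oscillation D
  set D : ℕ → ℝ := fun n => Mx n - mx n with hD
  have hDnn : ∀ n, 0 ≤ D n := fun n => sub_nonneg.mpr (hmM n)
  have hDanti : ∀ n r, D (n + r) ≤ D n := fun n r =>
    sub_le_sub (hMmono n r) (hmmono n r)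
  have hDcon : ∀ n, D (n + N) ≤ (1 - ε) * D n := by
    intro n
    have h1 := hcon n
    have h2 := hmmono n N
    show Mx (n + N) - mx (n + N) ≤ (1 - ε) * (Mx n - mx n)
    nlinarith
  have h1ε0 : (0:ℝ) ≤ 1 - ε := by linarith
  have h1ε1 : (1:ℝ) - ε < 1 := by linarith
  have hDq : ∀ q : ℕ, D (N * q) ≤ (1 - ε) ^ q * D 0 := by
    intro q
    induction q with
    | zero => simp
    | succ q ih =>
      have : N * (q + 1) = N * q + N := by ring
      rw [this]
      calc D (N * q + N) ≤ (1 - ε) * D (N * q) := hDcon _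
        _ ≤ (1 - ε) * ((1 - ε) ^ q * D 0) := by
            exact mul_le_mul_of_nonneg_left ih h1ε0
        _ = (1 - ε) ^ (q + 1) * D 0 := by ring
  have hDn : ∀ n : ℕ, D n ≤ (1 - ε) ^ (n / N) * D 0 := by
    intro n
    have hle : N * (n / N) ≤ n := Nat.mul_div_le n N
    obtain ⟨s, hs⟩ := Nat.exists_eq_add_of_le hle
    calc D n = D (N * (n / N) + s) := by rw [← hs]
      _ ≤ D (N * (n / N)) := hDanti _ _
      _ ≤ (1 - ε) ^ (n / N) * D 0 := hDq _
  have hdivtop : Tendsto (fun n : ℕ => n / N) atTop atTop := by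
    refine Filter.tendsto_atTop_atTop.mpr fun b => ⟨N * b, fun n hn => ?_⟩
    exact (Nat.le_div_iff_mul_le hN).mpr (by rw [Nat.mul_comm]; exact hn)
  have hpowlim : Tendsto (fun q : ℕ => (1 - ε) ^ q) atTop (nhds 0) :=
    tendsto_pow_atTop_nhds_zero_of_lt_one h1ε0 h1ε1
  have hblim : Tendsto (fun n : ℕ => (1 - ε) ^ (n / N) * D 0) atTop (nhds 0) := by
    have := (hpowlim.comp hdivtop).mul_const (D 0)
    simpa using this
  have hDlim : Tendsto D atTop (nhds 0) :=
    squeeze_zero hDnn hDn hblim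
  -- monotone convergence of mx
  have hmono : Monotone mx := monotone_nat_of_le_succ fun n => hmmono n 1
  have hbdd : BddAbove (Set.range mx) := by
    refine ⟨Mx 0, ?_⟩
    rintro _ ⟨n, rfl⟩
    calc mx n ≤ Mx n := hmM n
      _ = Mx (0 + n) := by rw [Nat.zero_add]
      _ ≤ Mx 0 := hMmono 0 n
  have hmc : Tendsto mx atTop (nhds (⨆ n, mx n)) := tendsto_atTop_ciSup hmono hbdd
  refine ⟨⨆ n, mx n, fun j => ?_⟩
  have h2 : Tendsto (fun n => mx n + D n) atTop (nhds (⨆ n, mx n)) := by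
    simpa using hmc.add hDlim
  have hxeq : (fun n => Emat A ω V a n i j) = fun n => x n j := rfl
  rw [hxeq]
  refine tendsto_of_tendsto_of_tendsto_of_le_of_le hmc h2 (fun n => hxlb n j) fun n => ?_
  show x n j ≤ mx n + D n
  have := hxub n j
  simp only [hD]
  linarith

end
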